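/- Let q ≥ 1 be an integer and let c : ℤ[i] → ℂ be finitely supported and supported on odd primitive Gaussian integers. Define S'''_q = Σ_{z₁ = u₁+iv₁, z₂ = u₂+iv₂ ∈ ℤ[i], u₁v₂ ≡ u₂v₁ (mod q), gcd(v₁v₂, q) = 1, z₁ and z₂ each coprime to q in ℤ[i]} c(z₁)·conj(c(z₂)). Then 0 ≤ S'''_q ≤ S'_q. -/

import Mathlib

open scoped ComplexConjugate
open scoped Classical

noncomputable section

/-- `z = u+iv` is *odd primitive*: `u ≢ v (mod 2)`, `gcd(u,v) = 1`, `uv ≠ 0`. -/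
def OddPrimitive (z : GaussianInt) : Prop :=
  ¬ z.re ≡ z.im [ZMOD 2] ∧ Int.gcd z.re z.im = 1 ∧ z.re * z.im ≠ 0

/-- The determinant sum `S_q = ∑_{u₁v₂ ≡ u₂v₁ (mod q)} c(z₁) conj (c(z₂))`. -/
def detSum (c : GaussianInt → ℂ) (q : ℕ) : ℂ :=
  ∑ᶠ z₁ : GaussianInt, ∑ᶠ z₂ : GaussianInt,
    if (q : ℤ) ∣ (z₁.re * z₂.im - z₂.re * z₁.im) then c z₁ * conj (c z₂) else 0

/-- The reduced determinant sum `S'_q`, with the extra condition `gcd(v₁v₂, q) = 1`. -/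
def detSum' (c : GaussianInt → ℂ) (q : ℕ) : ℂ :=
  ∑ᶠ z₁ : GaussianInt, ∑ᶠ z₂ : GaussianInt,
    if (q : ℤ) ∣ (z₁.re * z₂.im - z₂.re * z₁.im) ∧ Int.gcd (z₁.im * z₂.im) q = 1
    then c z₁ * conj (c z₂) else 0

/-- `S(Q,X) = ∑_{1 ≤ q ≤ Q} S_q` (the dependence on `X` is through the support of `c`). -/
def SQX (c : GaussianInt → ℂ) (Q : ℝ) : ℂ :=
  ∑ q ∈ Finset.Icc 1 ⌊Q⌋₊, detSum c q

/-- `c` is supported on odd primitive Gaussian integers `z` with `1 < |z|² ≤ X`. -/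
def SuppOK (c : GaussianInt → ℂ) (X : ℝ) : Prop :=
  ∀ z : GaussianInt, c z ≠ 0 →
    OddPrimitive z ∧ 1 < (Zsqrtd.norm z : ℝ) ∧ (Zsqrtd.norm z : ℝ) ≤ X

/-- The Siegel–Walfisz condition with exponent `B` and constant `K`. -/
def SWCond (c : GaussianInt → ℂ) (X B K : ℝ) : Prop :=
  ∀ (k ℓ : ℕ), 1 ≤ ℓ → ∀ (α : GaussianInt) (t : ℝ),
    ‖∑ᶠ z : GaussianInt,
        if z ≠ 0 ∧ (ℓ : GaussianInt) ∣ (z - α) then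
          c z * (conj (GaussianInt.toComplex z) / GaussianInt.toComplex z) ^ k *
            ((‖GaussianInt.toComplex z‖ : ℝ) : ℂ) ^ ((t : ℂ) * Complex.I)
        else 0‖
      ≤ K * (ℓ : ℝ) ^ 2 * ((k : ℝ) ^ 2 + 1) * (t ^ 2 + 1) * X * Real.log X ^ (-B)

/-- The restricted determinant sum `S'''_q`: besides `u₁v₂ ≡ u₂v₁ (mod q)` and
`gcd(v₁v₂,q) = 1` we require that `z₁` and `z₂` are coprime to `q` in `ℤ[i]`. -/
def detSum''' (c : GaussianInt → ℂ) (q : ℕ) : ℂ :=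
  ∑ᶠ z₁ : GaussianInt, ∑ᶠ z₂ : GaussianInt,
    if (q : ℤ) ∣ (z₁.re * z₂.im - z₂.re * z₁.im) ∧ Int.gcd (z₁.im * z₂.im) q = 1 ∧
        IsCoprime z₁ (q : GaussianInt) ∧ IsCoprime z₂ (q : GaussianInt)
    then c z₁ * conj (c z₂) else 0

/-! ### Auxiliary lemmas -/

/-- Coprimality to `q` (in `ℤ[i]`) transfers across the determinant relation. -/
lemma coprime_transfer (q : ℕ) (z₁ z₂ : GaussianInt)
    (hdvd : (q : ℤ) ∣ (z₁.re * z₂.im - z₂.re * z₁.im))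
    (h1 : Int.gcd z₁.im q = 1) (h2 : Int.gcd z₂.im q = 1)
    (hz : IsCoprime z₁ (q : GaussianInt)) : IsCoprime z₂ (q : GaussianInt) := by
  have h2' : IsCoprime ((z₂.im : ℤ) : GaussianInt) ((q : ℤ) : GaussianInt) :=
    (Int.isCoprime_iff_gcd_eq_one.mpr h2).map (Int.castRingHom GaussianInt)
  have h1' : IsCoprime ((z₁.im : ℤ) : GaussianInt) ((q : ℤ) : GaussianInt) :=
    (Int.isCoprime_iff_gcd_eq_one.mpr h1).map (Int.castRingHom GaussianInt)
  obtain ⟨m, hm⟩ := hdvd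
  have key : ((z₁.im : ℤ) : GaussianInt) * z₂ =
      ((z₂.im : ℤ) : GaussianInt) * z₁ + ((q : ℤ) : GaussianInt) * ((-m : ℤ) : GaussianInt) := by
    have : z₁.re * z₂.im - z₂.re * z₁.im = q * m := hm
    ext <;> simp [Zsqrtd.re_mul, Zsqrtd.im_mul] <;> linarith
  have hc : IsCoprime (((z₂.im : ℤ) : GaussianInt) * z₁) ((q : ℤ) : GaussianInt) := by
    simp only [Int.cast_natCast] at h2' hz ⊢
    exact h2'.mul_left hz
  have hc2 : IsCoprime (((z₁.im : ℤ) : GaussianInt) * z₂) ((q : ℤ) : GaussianInt) := by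
    rw [key]
    exact hc.add_mul_left_left _
  have := hc2.of_mul_left_right
  simpa using this

lemma isUnit_of_gcd (q : ℕ) (v : ℤ) (h : Int.gcd v q = 1) : IsUnit ((v : ZMod q)) := by
  have := (Int.isCoprime_iff_gcd_eq_one.mpr h).map (Int.castRingHom (ZMod q))
  have h0 : IsCoprime ((v : ZMod q)) 0 := by simpa using this
  exact isCoprime_zero_right.mp h0

lemma dvd_iff_f_eq (q : ℕ) (z₁ z₂ : GaussianInt)
    (h1 : Int.gcd z₁.im q = 1) (h2 : Int.gcd z₂.im q = 1) :
    ((q : ℤ) ∣ (z₁.re * z₂.im - z₂.re * z₁.im)) ↔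
      (z₁.re : ZMod q) * (z₁.im : ZMod q)⁻¹ = (z₂.re : ZMod q) * (z₂.im : ZMod q)⁻¹ := by
  have hu1 := isUnit_of_gcd q z₁.im h1
  have hu2 := isUnit_of_gcd q z₂.im h2
  have i1 : (z₁.im : ZMod q) * (z₁.im : ZMod q)⁻¹ = 1 := ZMod.mul_inv_of_unit _ hu1
  have i2 : (z₂.im : ZMod q) * (z₂.im : ZMod q)⁻¹ = 1 := ZMod.mul_inv_of_unit _ hu2
  rw [← ZMod.intCast_zmod_eq_zero_iff_dvd]
  push_cast
  rw [sub_eq_zero]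
  constructor
  · intro h
    linear_combination ((z₁.im : ZMod q)⁻¹ * (z₂.im : ZMod q)⁻¹) * h
      + ((z₂.re : ZMod q) * (z₂.im : ZMod q)⁻¹) * i1
      - ((z₁.re : ZMod q) * (z₁.im : ZMod q)⁻¹) * i2
  · intro h
    linear_combination ((z₁.im : ZMod q) * (z₂.im : ZMod q)) * h
      - ((z₁.re : ZMod q) * (z₂.im : ZMod q)) * i1
      + ((z₂.re : ZMod q) * (z₁.im : ZMod q)) * i2

lemma sum_pair_fiber {q : ℕ} [NeZero q] (t : Finset GaussianInt)
    (f : GaussianInt → ZMod q) (c : GaussianInt → ℂ) :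
    ∑ z₁ ∈ t, ∑ z₂ ∈ t, (if f z₁ = f z₂ then c z₁ * conj (c z₂) else 0)
      = ∑ r : ZMod q, (∑ z ∈ t, if f z = r then c z else 0) *
          conj (∑ z ∈ t, if f z = r then c z else 0) := by
  have : ∀ r : ZMod q,
      (∑ z ∈ t, if f z = r then c z else 0) * conj (∑ z ∈ t, if f z = r then c z else 0)
      = ∑ z₁ ∈ t, ∑ z₂ ∈ t,
          (if f z₁ = r then c z₁ else 0) * conj (if f z₂ = r then c z₂ else 0) := by
    intro r
    rw [map_sum, Finset.sum_mul_sum]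
  simp only [this]
  conv_rhs => rw [Finset.sum_comm]
  refine Finset.sum_congr rfl fun z₁ _ => ?_
  conv_rhs => rw [Finset.sum_comm]
  refine Finset.sum_congr rfl fun z₂ _ => ?_
  by_cases h : f z₁ = f z₂
  · rw [if_pos h]
    symm
    have : ∀ r : ZMod q, (if f z₁ = r then c z₁ else 0) * conj (if f z₂ = r then c z₂ else 0)
        = if f z₁ = r then c z₁ * conj (c z₂) else 0 := by
      intro r
      by_cases hr : f z₁ = r
      · rw [if_pos hr, if_pos hr, if_pos (h ▸ hr)]
      · rw [if_neg hr, if_neg hr, zero_mul]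
    simp only [this]
    rw [Finset.sum_ite_eq]
    simp
  · rw [if_neg h]
    symm
    apply Finset.sum_eq_zero
    intro r _
    by_cases hr : f z₁ = r
    · rw [if_pos hr, if_neg (fun hh => h (hr.trans hh.symm)), map_zero, mul_zero]
    · rw [if_neg hr, zero_mul]

lemma gcd_mul_split (q : ℕ) (a b : ℤ) :
    Int.gcd (a * b) q = 1 ↔ Int.gcd a q = 1 ∧ Int.gcd b q = 1 := by
  unfold Int.gcd
  rw [Int.natAbs_mul]
  exact Nat.coprime_mul_iff_left

lemma finsum_pair_eq_sum (c : GaussianInt → ℂ) (hfin : (Function.support c).Finite)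
    (g : GaussianInt → GaussianInt → ℂ)
    (hg1 : ∀ z₁ z₂, c z₁ = 0 → g z₁ z₂ = 0) (hg2 : ∀ z₁ z₂, c z₂ = 0 → g z₁ z₂ = 0) :
    (∑ᶠ z₁ : GaussianInt, ∑ᶠ z₂ : GaussianInt, g z₁ z₂)
      = ∑ z₁ ∈ hfin.toFinset, ∑ z₂ ∈ hfin.toFinset, g z₁ z₂ := by
  rw [finsum_eq_sum_of_support_subset]
  · refine Finset.sum_congr rfl fun z₁ _ => ?_
    rw [finsum_eq_sum_of_support_subset]
    intro z₂ hz₂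
    simp only [Function.mem_support] at hz₂
    have hc : c z₂ ≠ 0 := by
      intro h; exact hz₂ (hg2 z₁ z₂ h)
    rw [Set.Finite.coe_toFinset]
    exact hc
  · intro z₁ hz₁
    simp only [Function.mem_support] at hz₁
    have hc : c z₁ ≠ 0 := by
      intro h
      apply hz₁
      have hz : ∀ z₂ : GaussianInt, g z₁ z₂ = 0 := fun z₂ => hg1 z₁ z₂ h
      rw [finsum_congr hz, finsum_zero]
    rw [Set.Finite.coe_toFinset]
    exact hc

lemma sum_pull_ite (u : Finset GaussianInt) (p : Prop) [Decidable p] (g : GaussianInt → ℂ) :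
    (∑ z ∈ u, if p then g z else 0) = if p then ∑ z ∈ u, g z else 0 := by
  split_ifs <;> simp


/-- **Estimate (2.3)–(2.4).** If `c` is finitely supported and supported on odd primitive
Gaussian integers, then `0 ≤ S'''_q ≤ S'_q` (and both sums are real). -/
theorem detSum'''_le_detSum' (c : GaussianInt → ℂ) (hfin : (Function.support c).Finite)
    (hsupp : ∀ z : GaussianInt, c z ≠ 0 → OddPrimitive z) (q : ℕ) (hq : 1 ≤ q) :
    (detSum''' c q).im = 0 ∧ (detSum' c q).im = 0 ∧
    0 ≤ (detSum''' c q).re ∧ (detSum''' c q).re ≤ (detSum' c q).re := by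
  haveI : NeZero q := ⟨by omega⟩
  set s : Finset GaussianInt := hfin.toFinset with hs
  set f : GaussianInt → ZMod q := fun z => (z.re : ZMod q) * (z.im : ZMod q)⁻¹ with hf
  set A : GaussianInt → Prop := fun z => Int.gcd z.im q = 1 with hA
  set A' : GaussianInt → Prop :=
    fun z => Int.gcd z.im q = 1 ∧ IsCoprime z (q : GaussianInt) with hA'
  set t : Finset GaussianInt := s.filter A with ht
  set t' : Finset GaussianInt := s.filter A' with ht'
  set F : ZMod q → ℂ := fun r => ∑ z ∈ t, if f z = r then c z else 0 with hF
  set G : ZMod q → ℂ := fun r => ∑ z ∈ t', if f z = r then c z else 0 with hG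
  -- generic reduction of a double sum to a sum of squares over residues
  have reduce : ∀ (B : GaussianInt → Prop) (instB : DecidablePred B)
      (P : GaussianInt → GaussianInt → Prop)
      (inst : ∀ z₁ z₂, Decidable (P z₁ z₂)),
      (∀ z₁ z₂, P z₁ z₂ ↔ (B z₁ ∧ B z₂ ∧ f z₁ = f z₂)) →
      (∑ z₁ ∈ s, ∑ z₂ ∈ s, @ite ℂ (P z₁ z₂) (inst z₁ z₂) (c z₁ * conj (c z₂)) 0)
        = ∑ r : ZMod q, (∑ z ∈ @Finset.filter _ B instB s, if f z = r then c z else 0) *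
            conj (∑ z ∈ @Finset.filter _ B instB s, if f z = r then c z else 0) := by
    intro B instB P inst hPB
    have key : ∀ z₁ z₂ : GaussianInt,
        (@ite ℂ (P z₁ z₂) (inst z₁ z₂) (c z₁ * conj (c z₂)) 0)
          = if B z₁ then
              (if B z₂ then (if f z₁ = f z₂ then c z₁ * conj (c z₂) else 0) else 0)
            else 0 := by
      intro z₁ z₂
      rw [if_congr (hPB z₁ z₂) rfl rfl, ite_and, ite_and]
    calc (∑ z₁ ∈ s, ∑ z₂ ∈ s, @ite ℂ (P z₁ z₂) (inst z₁ z₂) (c z₁ * conj (c z₂)) 0)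
        = ∑ z₁ ∈ s, ∑ z₂ ∈ s, (if B z₁ then
            (if B z₂ then (if f z₁ = f z₂ then c z₁ * conj (c z₂) else 0) else 0) else 0) := by
          simp only [key]
      _ = ∑ z₁ ∈ s, (if B z₁ then (∑ z₂ ∈ s,
            (if B z₂ then (if f z₁ = f z₂ then c z₁ * conj (c z₂) else 0) else 0)) else 0) := by
          refine Finset.sum_congr rfl fun z₁ _ => sum_pull_ite s (B z₁) _
      _ = ∑ z₁ ∈ s.filter B, ∑ z₂ ∈ s.filter B,
            (if f z₁ = f z₂ then c z₁ * conj (c z₂) else 0) := by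
          rw [Finset.sum_filter]
          refine Finset.sum_congr rfl fun z₁ _ => ?_
          by_cases h : B z₁
          · rw [if_pos h, if_pos h, Finset.sum_filter]
          · rw [if_neg h, if_neg h]
      _ = _ := sum_pair_fiber (s.filter B) f c
  have e1 : detSum' c q = ∑ r : ZMod q, F r * conj (F r) := by
    rw [detSum']
    refine (finsum_pair_eq_sum c hfin _
      (fun z₁ z₂ h => by simp [h]) (fun z₁ z₂ h => by simp [h])).trans ?_
    rw [← hs]
    simp only [hF, ht]
    refine (reduce A _
      (fun z₁ z₂ => (q : ℤ) ∣ (z₁.re * z₂.im - z₂.re * z₁.im) ∧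
        Int.gcd (z₁.im * z₂.im) q = 1) _ fun z₁ z₂ => ?_)
    constructor
    · rintro ⟨hd, hg⟩
      obtain ⟨g1, g2⟩ := (gcd_mul_split q z₁.im z₂.im).mp hg
      exact ⟨g1, g2, (dvd_iff_f_eq q z₁ z₂ g1 g2).mp hd⟩
    · rintro ⟨g1, g2, hfe⟩
      exact ⟨(dvd_iff_f_eq q z₁ z₂ g1 g2).mpr hfe, (gcd_mul_split q z₁.im z₂.im).mpr ⟨g1, g2⟩⟩
  have e3 : detSum''' c q = ∑ r : ZMod q, G r * conj (G r) := by
    rw [detSum''']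
    refine (finsum_pair_eq_sum c hfin _
      (fun z₁ z₂ h => by simp [h]) (fun z₁ z₂ h => by simp [h])).trans ?_
    rw [← hs]
    simp only [hG, ht']
    refine (reduce A' _
      (fun z₁ z₂ => (q : ℤ) ∣ (z₁.re * z₂.im - z₂.re * z₁.im) ∧
        Int.gcd (z₁.im * z₂.im) q = 1 ∧
        IsCoprime z₁ (q : GaussianInt) ∧ IsCoprime z₂ (q : GaussianInt)) _ fun z₁ z₂ => ?_)
    constructor
    · rintro ⟨hd, hg, hc1, hc2⟩
      obtain ⟨g1, g2⟩ := (gcd_mul_split q z₁.im z₂.im).mp hg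
      exact ⟨⟨g1, hc1⟩, ⟨g2, hc2⟩, (dvd_iff_f_eq q z₁ z₂ g1 g2).mp hd⟩
    · rintro ⟨⟨g1, hc1⟩, ⟨g2, hc2⟩, hfe⟩
      exact ⟨(dvd_iff_f_eq q z₁ z₂ g1 g2).mpr hfe,
        (gcd_mul_split q z₁.im z₂.im).mpr ⟨g1, g2⟩, hc1, hc2⟩
  have e2 : detSum' c q = ((∑ r : ZMod q, Complex.normSq (F r) : ℝ) : ℂ) := by
    rw [e1]
    simp only [Complex.mul_conj]
    norm_cast
  have e4 : detSum''' c q = ((∑ r : ZMod q, Complex.normSq (G r) : ℝ) : ℂ) := by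
    rw [e3]
    simp only [Complex.mul_conj]
    norm_cast
  have hle : ∀ r : ZMod q, Complex.normSq (G r) ≤ Complex.normSq (F r) := by
    intro r
    by_cases hr : ∀ z ∈ t, f z = r → IsCoprime z (q : GaussianInt)
    · have hGF : G r = F r := by
        apply Finset.sum_subset
        · intro z hz
          rw [ht', Finset.mem_filter] at hz
          rw [ht, Finset.mem_filter]
          exact ⟨hz.1, hz.2.1⟩
        · intro z hzt hznt
          rw [if_neg]
          intro hfz
          apply hznt
          rw [ht, Finset.mem_filter] at hzt
          rw [ht', Finset.mem_filter]
          exact ⟨hzt.1, hzt.2, hr z (by rw [ht, Finset.mem_filter]; exact hzt) hfz⟩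
      rw [hGF]
    · push_neg at hr
      obtain ⟨z₀, hz₀t, hfz₀, hcop₀⟩ := hr
      have hG0 : G r = 0 := by
        apply Finset.sum_eq_zero
        intro z hz
        rw [ht', Finset.mem_filter] at hz
        rw [if_neg]
        intro hfz
        apply hcop₀
        have hg : Int.gcd z.im q = 1 := hz.2.1
        have hg₀ : Int.gcd z₀.im q = 1 := by
          rw [ht, Finset.mem_filter] at hz₀t
          exact hz₀t.2
        have hfeq : f z = f z₀ := by rw [hfz, hfz₀]
        have hdvd : (q : ℤ) ∣ (z.re * z₀.im - z₀.re * z.im) :=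
          (dvd_iff_f_eq q z z₀ hg hg₀).mpr hfeq
        exact coprime_transfer q z z₀ hdvd hg hg₀ hz.2.2
      rw [hG0]
      simpa using Complex.normSq_nonneg (F r)
  refine ⟨by rw [e4]; simp, by rw [e2]; simp, ?_, ?_⟩
  · rw [e4]
    simp only [Complex.ofReal_re]
    exact Finset.sum_nonneg fun r _ => Complex.normSq_nonneg _
  · rw [e2, e4]
    simp only [Complex.ofReal_re]
    exact Finset.sum_le_sum fun r _ => hle r
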